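/- Let E = (V, C, σ), p ∈ Δ(V), q ∈ Δ(C), and for each candidate c let X_c be a minimal counterexample (a ⊆-minimal set with q(D(c, X_c)) < p(X_c), where D(c,S) = {c' : ∃ i ∈ S, c ⪰_i c'}), assuming every candidate has a counterexample. Let C* = argmax_c p(X_c), order C* by the partial order bRc iff X_b ⊇ X_c and b ≻_i c for all i ∈ X_c, and let a be a maximal element of C*. Then for every b ∉ D(a, X_a), the sets X_a and X_b are incomparable: X_a \ X_b ≠ ∅ and X_b \ X_a ≠ ∅. -/

import Mathlib

open Classical in
/-- The incomparability lemma (Lemma 3.2 in the paper): with minimal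
counterexamples `X c` for every candidate, a candidate `a` whose counterexample
has maximum `p`-weight and which is maximal under the partial order `R`, and any
`b` not weakly defeated by `a` in `X a`, the sets `X a` and `X b` are
incomparable. -/
theorem stmt19 {V C : Type*} [Fintype V] [Fintype C]
    (σ : V → C → C → Prop) (hσ : ∀ i, IsStrictTotalOrder C (σ i))
    (p : V → ℝ) (q : C → ℝ)
    (hp0 : ∀ i, 0 ≤ p i) (hq0 : ∀ c, 0 ≤ q c)
    (hp1 : ∑ i, p i = 1) (hq1 : ∑ c, q c = 1)
    -- D c S is the set of candidates weakly defeated by c in some vote of S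
    (D : C → Finset V → Finset C)
    (hD : ∀ c S, D c S = Finset.univ.filter (fun c' => ∃ i ∈ S, c = c' ∨ σ i c c'))
    -- every candidate has a counterexample; X c is a fixed minimal one
    (X : C → Finset V)
    (hXce : ∀ c, ∑ c' ∈ D c (X c), q c' < ∑ i ∈ X c, p i)
    (hXmin : ∀ c, ∀ S ⊂ X c, ¬ (∑ c' ∈ D c S, q c' < ∑ i ∈ S, p i))
    (a : C)
    -- a's minimal counterexample has the largest p-weight
    (haC : ∀ c : C, ∑ i ∈ X c, p i ≤ ∑ i ∈ X a, p i)
    -- a is maximal in C* under the partial order R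
    (hamax : ∀ b : C, (∑ i ∈ X b, p i = ∑ i ∈ X a, p i) →
      (X a ⊆ X b ∧ ∀ i ∈ X a, σ i b a) → b = a)
    (b : C) (hb : b ∉ D a (X a)) :
    (X a \ X b).Nonempty ∧ (X b \ X a).Nonempty := by
  classical
  have ha_ne : (X a).Nonempty := by
    rcases Finset.eq_empty_or_nonempty (X a) with h | h
    · exfalso
      have h1 := hXce a
      have h2 : (0:ℝ) ≤ ∑ c' ∈ D a (X a), q c' := Finset.sum_nonneg fun c _ => hq0 c
      have h3 : ∑ i ∈ X a, p i = 0 := by rw [h]; simp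
      linarith
    · exact h
  have hba : ∀ i ∈ X a, σ i b a := by
    intro i hi
    have hnot : ¬ (a = b ∨ σ i a b) := by
      intro hc
      apply hb
      rw [hD]
      exact Finset.mem_filter.mpr ⟨Finset.mem_univ _, i, hi, hc⟩
    push_neg at hnot
    rcases (or_iff_not_imp_left.mpr fun h1 => or_iff_not_imp_right.mpr fun h2 => (hσ i).trichotomous b a h1 h2 : σ i b a ∨ b = a ∨ σ i a b) with h | h | h
    · exact h
    · exact absurd h.symm hnot.1
    · exact absurd h hnot.2
  have L : ¬ X a ⊆ X b := by
    intro hsub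
    have he : ∑ i ∈ X b, p i = ∑ i ∈ X a, p i :=
      le_antisymm (haC b) (Finset.sum_le_sum_of_subset_of_nonneg hsub fun i _ _ => hp0 i)
    have hba' := hamax b he ⟨hsub, hba⟩
    subst hba'
    apply hb
    rw [hD]
    obtain ⟨i, hi⟩ := ha_ne
    exact Finset.mem_filter.mpr ⟨Finset.mem_univ _, i, hi, Or.inl rfl⟩
  constructor
  · rw [Finset.sdiff_nonempty]
    exact L
  · rw [Finset.sdiff_nonempty]
    intro hsub
    have hDsub : D a (X b) ⊆ D b (X b) := by
      intro c' hc'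
      rw [hD] at hc' ⊢
      rw [Finset.mem_filter] at hc' ⊢
      obtain ⟨_, i, hi, h⟩ := hc'
      refine ⟨Finset.mem_univ _, i, hi, Or.inr ?_⟩
      have hba' := hba i (hsub hi)
      rcases h with rfl | h
      · exact hba'
      · exact (hσ i).trans _ _ _ hba' h
    have hce : ∑ c' ∈ D a (X b), q c' < ∑ i ∈ X b, p i :=
      calc ∑ c' ∈ D a (X b), q c' ≤ ∑ c' ∈ D b (X b), q c' :=
            Finset.sum_le_sum_of_subset_of_nonneg hDsub fun c _ _ => hq0 c
        _ < _ := hXce b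
    by_cases heq : X b = X a
    · exact L (by rw [heq])
    · exact hXmin a (X b) (ssubset_of_subset_of_ne hsub heq) hce
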